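/- arXiv:1302.3059 — 2 statements merged into one kernel-verified Lean document; each statement's English description precedes it below -/
import Mathlib

section
/- Let q = p^k be an odd prime power with q > 3 and let G = PSL₂(q). Then any two distinct Sylow p-subgroups of G intersect trivially; equivalently, every element of G of order p lies in exactly one Sylow p-subgroup of G. -/
/-- `PSL₂(F)`: the quotient of `SL₂(F)` by its center. -/
abbrev PSL2 (F : Type*) [Field F] : Type _ :=
  Matrix.SpecialLinearGroup (Fin 2) F ⧸
    Subgroup.center (Matrix.SpecialLinearGroup (Fin 2) F)

namespace PSL2Aux

open Matrix

open Matrix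

variable {F : Type*} [Field F]

lemma ext2 {α : Type*} {M M' : Matrix (Fin 2) (Fin 2) α} (h00 : M 0 0 = M' 0 0)
    (h01 : M 0 1 = M' 0 1) (h10 : M 1 0 = M' 1 0) (h11 : M 1 1 = M' 1 1) : M = M' := by
  ext i j
  fin_cases i <;> fin_cases j
  · exact h00
  · exact h01
  · exact h10
  · exact h11

lemma sq_zero_trace_det {N : Matrix (Fin 2) (Fin 2) F} (h : N * N = 0) :
    N 0 0 + N 1 1 = 0 ∧ N 0 0 * N 1 1 - N 0 1 * N 1 0 = 0 := by
  have e := fun i j => congrFun (congrFun h i) j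
  simp only [Matrix.mul_apply, Fin.sum_univ_two, Matrix.zero_apply] at e
  have e00 := e 0 0; have e01 := e 0 1; have e10 := e 1 0; have e11 := e 1 1
  by_cases ht : N 0 0 + N 1 1 = 0
  · exact ⟨ht, by linear_combination N 0 0 * ht - e00⟩
  · exfalso
    have hb : N 0 1 = 0 := by
      rcases mul_eq_zero.mp (show N 0 1 * (N 0 0 + N 1 1) = 0 by linear_combination e01) with h' | h'
      · exact h'
      · exact absurd h' ht
    have ha : N 0 0 = 0 := mul_self_eq_zero.mp (by rw [hb] at e00; simpa using e00)
    have hd : N 1 1 = 0 := mul_self_eq_zero.mp (by rw [hb] at e11; simpa using e11)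
    exact ht (by rw [ha, hd, add_zero])

lemma comb_apply (a b : F) (N : Matrix (Fin 2) (Fin 2) F) (i j : Fin 2) :
    (a • (1 : Matrix (Fin 2) (Fin 2) F) + b • N) i j = a * (1 : Matrix (Fin 2) (Fin 2) F) i j + b * N i j := by
  simp [Matrix.add_apply, Matrix.smul_apply, smul_eq_mul]

/-- Anything commuting with a nonzero square-zero 2×2 matrix is a combination of `1` and it. -/
lemma commutant_sq_zero {N M : Matrix (Fin 2) (Fin 2) F} (h : N * N = 0) (h0 : N ≠ 0)
    (hc : M * N = N * M) : ∃ a b : F, M = a • 1 + b • N := by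
  have c := fun i j => congrFun (congrFun hc i) j
  simp only [Matrix.mul_apply, Fin.sum_univ_two] at c
  obtain ⟨ht, hd⟩ := sq_zero_trace_det h
  have one00 : (1 : Matrix (Fin 2) (Fin 2) F) 0 0 = 1 := Matrix.one_apply_eq 0
  have one11 : (1 : Matrix (Fin 2) (Fin 2) F) 1 1 = 1 := Matrix.one_apply_eq 1
  have one01 : (1 : Matrix (Fin 2) (Fin 2) F) 0 1 = 0 := Matrix.one_apply_ne (by decide)
  have one10 : (1 : Matrix (Fin 2) (Fin 2) F) 1 0 = 0 := Matrix.one_apply_ne (by decide)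
  by_cases hb : N 0 1 ≠ 0
  · refine ⟨M 0 0 - (M 0 1 / N 0 1) * N 0 0, M 0 1 / N 0 1, ext2 ?_ ?_ ?_ ?_⟩ <;>
      rw [comb_apply]
    · rw [one00]; field_simp; ring
    · rw [one01]; field_simp; ring
    · rw [one10]; field_simp
      first
      | linear_combination c 0 0
      | linear_combination (2:F) * c 0 0
      | linear_combination (-2:F) * c 0 0
      | linear_combination (-1:F) * c 0 0
    · rw [one11]; field_simp
      first
      | linear_combination c 0 1
      | linear_combination (2:F) * c 0 1
      | linear_combination (-2:F) * c 0 1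
      | linear_combination (-1:F) * c 0 1
  · push_neg at hb
    have e := fun i j => congrFun (congrFun h i) j
    simp only [Matrix.mul_apply, Fin.sum_univ_two, Matrix.zero_apply] at e
    have ha : N 0 0 = 0 := mul_self_eq_zero.mp (by have := e 0 0; rw [hb] at this; simpa using this)
    have hd' : N 1 1 = 0 := by linear_combination ht - ha
    have hc0 : N 1 0 ≠ 0 := by
      intro h10; exact h0 (ext2 (by rw [ha]; rfl) (by rw [hb]; rfl) (by rw [h10]; rfl) (by rw [hd']; rfl))
    have hM01 : M 0 1 = 0 := by
      have := c 0 0; rw [ha, hb] at this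
      rcases mul_eq_zero.mp (show M 0 1 * N 1 0 = 0 by linear_combination this) with h' | h'
      · exact h'
      · exact absurd h' hc0
    have hM11 : M 1 1 = M 0 0 := by
      rcases mul_eq_zero.mp (show (M 1 1 - M 0 0) * N 1 0 = 0 by
        linear_combination c 1 0 - M 1 0 * ha + M 1 0 * hd') with h' | h'
      · exact sub_eq_zero.mp h'
      · exact absurd h' hc0
    refine ⟨M 0 0, M 1 0 / N 1 0, ext2 ?_ ?_ ?_ ?_⟩ <;> rw [comb_apply]
    · rw [one00, ha]; ring
    · rw [one01, hb, hM01]; ring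
    · rw [one10]; field_simp; ring
    · rw [one11, hd', hM11]; ring

/-- `(1 + x)^m = 1 + m • x` when `x * x = 0`. -/
lemma one_add_pow_of_sq_zero {R : Type*} [Ring R] {x : R} (hx : x * x = 0) (m : ℕ) :
    (1 + x) ^ m = 1 + m • x := by
  induction m with
  | zero => simp
  | succ n ih =>
    rw [pow_succ, ih, add_mul, mul_add, mul_add, one_mul, mul_one, smul_mul_assoc, hx,
      smul_zero, add_zero, succ_nsmul, one_mul]
    abel

/-- 2×2 Cayley–Hamilton. -/
lemma cayley2 (M : Matrix (Fin 2) (Fin 2) F) :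
    M * M = (M 0 0 + M 1 1) • M - (M 0 0 * M 1 1 - M 0 1 * M 1 0) • 1 := by
  apply ext2 <;>
    simp only [Matrix.mul_apply, Fin.sum_univ_two, Matrix.sub_apply, Matrix.smul_apply,
      Matrix.one_apply_eq, Matrix.one_apply_ne (by decide : (0 : Fin 2) ≠ 1),
      Matrix.one_apply_ne (by decide : (1 : Fin 2) ≠ 0), smul_eq_mul] <;> ring

lemma det_comb {N : Matrix (Fin 2) (Fin 2) F} (h : N * N = 0) (a b : F) :
    (a • 1 + b • N).det = a ^ 2 := by
  obtain ⟨ht, hd⟩ := sq_zero_trace_det h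
  rw [Matrix.det_fin_two]
  simp only [comb_apply, Matrix.one_apply_eq, Matrix.one_apply_ne (by decide : (0 : Fin 2) ≠ 1),
    Matrix.one_apply_ne (by decide : (1 : Fin 2) ≠ 0)]
  linear_combination (a * b) * ht + b ^ 2 * hd

/-- A 2×2 matrix some power of which is zero has square zero. -/
lemma sq_eq_zero_of_pow_eq_zero {C : Matrix (Fin 2) (Fin 2) F} {m : ℕ} (hm : m ≠ 0)
    (h : C ^ m = 0) : C * C = 0 := by
  rcases eq_or_ne C 0 with rfl | hC
  · simp
  have hdet : C.det = 0 := by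
    have : C.det ^ m = 0 := by rw [← Matrix.det_pow, h, Matrix.det_zero]
    exact pow_eq_zero_iff hm |>.mp this
  have hCH : C * C = (C 0 0 + C 1 1) • C := by
    have := cayley2 C
    rw [Matrix.det_fin_two] at hdet
    rw [this, hdet]; simp
  have key : ∀ j : ℕ, C ^ (j + 1) = (C 0 0 + C 1 1) ^ j • C := by
    intro j
    induction j with
    | zero => simp
    | succ i ih =>
      rw [pow_succ, ih, smul_mul_assoc, hCH, smul_smul, ← pow_succ]
  obtain ⟨j, rfl⟩ : ∃ j, m = j + 1 := ⟨m - 1, (Nat.succ_pred_eq_of_pos (Nat.pos_of_ne_zero hm)).symm⟩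
  have h0 := h
  rw [key j] at h0
  rcases smul_eq_zero.mp h0 with h' | h'
  · rcases j with _ | i
    · exact absurd (by simpa using h) hC
    · have : C 0 0 + C 1 1 = 0 := pow_eq_zero_iff (Nat.succ_ne_zero i) |>.mp h'
      rw [hCH, this, zero_smul]
  · exact absurd h' hC


lemma scalar_eq_smul_one (r : F) :
    Matrix.scalar (Fin 2) r = r • (1 : Matrix (Fin 2) (Fin 2) F) := by
  ext i j
  by_cases h : i = j <;>
    simp [Matrix.scalar_apply, Matrix.diagonal_apply, Matrix.smul_apply, Matrix.one_apply, h]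

lemma comb_mul {N : Matrix (Fin 2) (Fin 2) F} (hN : N * N = 0) (a b c d : F) :
    (a • 1 + b • N) * (c • 1 + d • N) = (a * c) • (1 : Matrix (Fin 2) (Fin 2) F) + (a * d + b * c) • N := by
  rw [mul_add, add_mul, add_mul, smul_mul_smul_comm, smul_mul_smul_comm, smul_mul_smul_comm,
    smul_mul_smul_comm, hN, one_mul, mul_one, one_mul, smul_zero, add_zero, add_smul]
  abel

variable (p : ℕ) [Fact p.Prime] [CharP F p]

lemma two_ne_zero_of_char (hp2 : p ≠ 2) : (2 : F) ≠ 0 := by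
  intro h
  have := (CharP.cast_eq_zero_iff F p 2).mp (by exact_mod_cast h)
  rcases (Nat.prime_dvd_prime_iff_eq (Fact.out) Nat.prime_two).mp this with h'
  exact hp2 h'

/-- A nontrivial `p`-element of `PSL₂(F)` lifts to `± (unipotent)`. -/
lemma key_form (hp2 : p ≠ 2) {x : PSL2 F} (hx1 : x ≠ 1) (hx : ∃ n : ℕ, x ^ p ^ n = 1) :
    ∃ (A : Matrix.SpecialLinearGroup (Fin 2) F) (N : Matrix (Fin 2) (Fin 2) F) (ε : F),
      (QuotientGroup.mk A : PSL2 F) = x ∧ N * N = 0 ∧ N ≠ 0 ∧ (ε = 1 ∨ ε = -1) ∧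
      (A : Matrix (Fin 2) (Fin 2) F) = ε • (1 + N) := by
  obtain ⟨n, hn⟩ := hx
  obtain ⟨A, rfl⟩ := QuotientGroup.mk_surjective x
  rw [← QuotientGroup.mk_pow, QuotientGroup.eq_one_iff] at hn
  obtain ⟨c, hc2, hcs⟩ := Matrix.SpecialLinearGroup.mem_center_iff.mp hn
  have hc2' : c * c = 1 := by
    have : c ^ (2 : ℕ) = 1 := by simpa using hc2
    rw [← this]; ring
  set B : Matrix (Fin 2) (Fin 2) F := (A : Matrix (Fin 2) (Fin 2) F) with hBdef
  have hB : B ^ (p ^ n) = c • 1 := by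
    rw [← Matrix.SpecialLinearGroup.coe_pow, ← hcs, scalar_eq_smul_one]
  have hB2 : B ^ (2 * p ^ n) = 1 := by
    rw [mul_comm, pow_mul, hB]
    rw [sq, smul_mul_smul_comm, hc2', one_mul, one_smul]
  have hCpow : (B * B - 1) ^ (p ^ n) = 0 := by
    have hcomm : Commute (B * B) (1 : Matrix (Fin 2) (Fin 2) F) := Commute.one_right _
    rw [sub_pow_char_pow_of_commute _ _ hcomm, one_pow, ← sq, ← pow_mul, hB2, sub_self]
  have hCC : (B * B - 1) * (B * B - 1) = 0 :=
    sq_eq_zero_of_pow_eq_zero (pow_ne_zero n (Fact.out (p := p.Prime)).ne_zero) hCpow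
  have hdetB : B.det = 1 := A.2
  have hdetB' : B 0 0 * B 1 1 - B 0 1 * B 1 0 = 1 := by
    rw [← Matrix.det_fin_two]; exact hdetB
  have hCdet : (B * B - 1).det = 0 := by
    have : (B * B - 1).det * (B * B - 1).det = 0 := by
      rw [← Matrix.det_mul, hCC, Matrix.det_zero]
    exact mul_self_eq_zero.mp this
  have hfac : B * B - 1 = (B - 1) * (B + 1) := by noncomm_ring
  have hcases : (B - 1).det = 0 ∨ (B + 1).det = 0 := by
    apply mul_eq_zero.mp; rw [← Matrix.det_mul, ← hfac]; exact hCdet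
  have hone : ∀ i j : Fin 2, (1 : Matrix (Fin 2) (Fin 2) F) i j = if i = j then 1 else 0 :=
    fun i j => Matrix.one_apply
  have hCH := cayley2 B
  rcases hcases with hdm | hdp
  · -- trace 2 case
    have ht : B 0 0 + B 1 1 = 2 := by
      rw [Matrix.det_fin_two, Matrix.sub_apply, Matrix.sub_apply, Matrix.sub_apply,
        Matrix.sub_apply, hone, hone, hone, hone] at hdm
      norm_num at hdm
      linear_combination hdetB' - hdm
    refine ⟨A, B - 1, 1, rfl, ?_, ?_, Or.inl rfl, ?_⟩
    · have : (B - 1) * (B - 1) = B * B - B - B + 1 := by noncomm_ring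
      rw [this, hCH, ht, hdetB', two_smul, one_smul]
      abel
    · intro h0
      apply hx1
      have hB1 : B = 1 := by rwa [sub_eq_zero] at h0
      have : A = 1 := Subtype.ext hB1
      rw [this, QuotientGroup.mk_one]
    · rw [one_smul, add_sub_cancel]
  · -- trace -2 case
    have ht : B 0 0 + B 1 1 = -2 := by
      rw [Matrix.det_fin_two, Matrix.add_apply, Matrix.add_apply, Matrix.add_apply,
        Matrix.add_apply, hone, hone, hone, hone] at hdp
      norm_num at hdp
      linear_combination hdp - hdetB'
    refine ⟨A, -B - 1, -1, rfl, ?_, ?_, Or.inr rfl, ?_⟩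
    · have h1 : (-B - 1) * (-B - 1) = (B + 1) * (B + 1) := by
        rw [show -B - 1 = -(B + 1) from by abel, neg_mul_neg]
      have h2 : (B + 1) * (B + 1) = B * B + B + B + 1 := by
        rw [mul_add, add_mul, add_mul, mul_one, one_mul, one_mul]; abel
      rw [h1, h2, hCH, ht, hdetB', neg_smul, two_smul, one_smul]
      abel
    · intro h0
      apply hx1
      have hBneg : B = -1 := by
        have h1 : -B = 1 := by rwa [sub_eq_zero] at h0
        exact neg_eq_iff_eq_neg.mp (by rw [h1])
      rw [QuotientGroup.eq_one_iff]
      apply Matrix.SpecialLinearGroup.mem_center_iff.mpr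
      refine ⟨-1, by simp, ?_⟩
      rw [scalar_eq_smul_one, neg_smul, one_smul, ← hBneg]
    · rw [neg_smul, one_smul]
      have : (1 : Matrix (Fin 2) (Fin 2) F) + (-B - 1) = -B := by abel
      rw [this, neg_neg]

lemma centralizer_form (hp2 : p ≠ 2) {x : PSL2 F} {A : Matrix.SpecialLinearGroup (Fin 2) F}
    {N : Matrix (Fin 2) (Fin 2) F} {ε : F} (hA : (QuotientGroup.mk A : PSL2 F) = x)
    (hN : N * N = 0) (hN0 : N ≠ 0) (hε : ε = 1 ∨ ε = -1)
    (hB : (A : Matrix (Fin 2) (Fin 2) F) = ε • (1 + N)) {y : PSL2 F}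
    (hy : y ∈ Subgroup.centralizer {x}) :
    ∃ (M : Matrix.SpecialLinearGroup (Fin 2) F) (a b : F),
      (QuotientGroup.mk M : PSL2 F) = y ∧ (a = 1 ∨ a = -1) ∧
      (M : Matrix (Fin 2) (Fin 2) F) = a • 1 + b • N := by
  obtain ⟨M, rfl⟩ := QuotientGroup.mk_surjective y
  have hcomm : x * (QuotientGroup.mk M) = (QuotientGroup.mk M) * x :=
    Subgroup.mem_centralizer_iff.mp hy x rfl
  rw [← hA, ← QuotientGroup.mk_mul, ← QuotientGroup.mk_mul] at hcomm
  have hz : (A * M)⁻¹ * (M * A) ∈ Subgroup.center (Matrix.SpecialLinearGroup (Fin 2) F) :=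
    QuotientGroup.eq.mp hcomm
  obtain ⟨r, hr2, hrs⟩ := Matrix.SpecialLinearGroup.mem_center_iff.mp hz
  have hr2' : r * r = 1 := by
    have : r ^ (2 : ℕ) = 1 := by simpa using hr2
    rw [← this]; ring
  set Bv : Matrix (Fin 2) (Fin 2) F := (A : Matrix (Fin 2) (Fin 2) F) with hBv
  set Mv : Matrix (Fin 2) (Fin 2) F := (M : Matrix (Fin 2) (Fin 2) F) with hMv
  -- M * A = (A * M) * z
  have hmats : Mv * Bv = r • (Bv * Mv) := by
    have : (A * M) * ((A * M)⁻¹ * (M * A)) = M * A := by group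
    have h2 := congrArg (fun g : Matrix.SpecialLinearGroup (Fin 2) F =>
      (g : Matrix (Fin 2) (Fin 2) F)) this
    simp only [Matrix.SpecialLinearGroup.coe_mul] at h2 hrs
    rw [← hrs, scalar_eq_smul_one] at h2
    rw [← h2, Matrix.mul_smul, Matrix.mul_one]
  -- trace argument: r = 1
  set W := ((M⁻¹ : Matrix.SpecialLinearGroup (Fin 2) F) : Matrix (Fin 2) (Fin 2) F) with hWdef
  have hW : Mv * W = 1 := by
    rw [hMv, hWdef, ← Matrix.SpecialLinearGroup.coe_mul, mul_inv_cancel]; rfl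
  have hW' : W * Mv = 1 := by
    rw [hMv, hWdef, ← Matrix.SpecialLinearGroup.coe_mul, inv_mul_cancel]; rfl
  have htrN : N 0 0 + N 1 1 = 0 := (sq_zero_trace_det hN).1
  have htrB : Matrix.trace Bv = ε * 2 := by
    rw [hB, Matrix.trace_smul, Matrix.trace_add, Matrix.trace_one, Matrix.trace_fin_two,
      htrN]
    simp [smul_eq_mul]
  have hε2 : ε * ε = 1 := by rcases hε with rfl | rfl <;> norm_num
  have htrB0 : Matrix.trace Bv ≠ 0 := by
    rw [htrB]
    intro h
    rcases mul_eq_zero.mp h with h' | h'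
    · rcases hε with rfl | rfl
      · exact one_ne_zero h'
      · exact one_ne_zero (by rw [← neg_neg (1 : F), h', neg_zero])
    · exact two_ne_zero_of_char p hp2 h'
  have hr1 : r = 1 := by
    have hconj : Mv * Bv * W = r • Bv := by
      rw [hmats, Matrix.smul_mul, mul_assoc, hW, Matrix.mul_one]
    have htr1 : Matrix.trace (Mv * Bv * W) = Matrix.trace Bv := by
      rw [mul_assoc, Matrix.trace_mul_comm, mul_assoc, hW', Matrix.mul_one]
    rw [hconj, Matrix.trace_smul, smul_eq_mul] at htr1
    have := mul_right_cancel₀ htrB0 (by rw [htr1, one_mul] : r * Matrix.trace Bv = 1 * Matrix.trace Bv)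
    exact this
  rw [hr1, one_smul] at hmats
  -- M commutes with N
  have hNB : N = ε • Bv - 1 := by
    rw [hB, smul_smul, hε2, one_smul, add_sub_cancel_left]
  have hMN : Mv * N = N * Mv := by
    rw [hNB, mul_sub, sub_mul, Matrix.mul_smul, Matrix.smul_mul, hmats, Matrix.mul_one,
      Matrix.one_mul]
  obtain ⟨a, b, hab⟩ := commutant_sq_zero hN hN0 hMN
  have hdet : a ^ 2 = 1 := by
    rw [← det_comb hN a b, ← hab]; exact M.2
  have ha : a = 1 ∨ a = -1 := by
    have : (a - 1) * (a + 1) = 0 := by linear_combination hdet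
    rcases mul_eq_zero.mp this with h' | h'
    · exact Or.inl (sub_eq_zero.mp h')
    · exact Or.inr (eq_neg_of_add_eq_zero_left h')
  exact ⟨M, a, b, rfl, ha, hab⟩

lemma centralizer_pgroup_comm (hp2 : p ≠ 2) (hpodd : Odd p) {x : PSL2 F} (hx1 : x ≠ 1)
    (hx : ∃ n : ℕ, x ^ p ^ n = 1) :
    (∀ y ∈ Subgroup.centralizer {x}, y ^ p = 1) ∧
    (∀ y ∈ Subgroup.centralizer {x}, ∀ z ∈ Subgroup.centralizer {x}, y * z = z * y) := by
  obtain ⟨A, N, ε, hA, hN, hN0, hε, hB⟩ := key_form p hp2 hx1 hx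
  have main : ∀ y ∈ Subgroup.centralizer {x},
      ∃ (M : Matrix.SpecialLinearGroup (Fin 2) F) (a b : F),
        (QuotientGroup.mk M : PSL2 F) = y ∧ (a = 1 ∨ a = -1) ∧
        (M : Matrix (Fin 2) (Fin 2) F) = a • 1 + b • N :=
    fun y hy => centralizer_form p hp2 hA hN hN0 hε hB hy
  constructor
  · intro y hy
    obtain ⟨M, a, b, rfl, ha, hM⟩ := main y hy
    have ha2 : a * a = 1 := by rcases ha with rfl | rfl <;> norm_num
    have hXX : ((a * b) • N) * ((a * b) • N) = 0 := by
      rw [smul_mul_smul_comm, hN, smul_zero]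
    have hMv : (M : Matrix (Fin 2) (Fin 2) F) = a • (1 + (a * b) • N) := by
      rw [hM, smul_add, smul_smul, ← mul_assoc, ha2, one_mul]
    have hpow : (M : Matrix (Fin 2) (Fin 2) F) ^ p = a • 1 := by
      rw [hMv, smul_pow, one_add_pow_of_sq_zero hXX, ← Nat.cast_smul_eq_nsmul F,
        CharP.cast_eq_zero F p, zero_smul, add_zero]
      congr 1
      rcases ha with rfl | rfl
      · rw [one_pow]
      · exact Odd.neg_one_pow hpodd
    have hcen : M ^ p ∈ Subgroup.center (Matrix.SpecialLinearGroup (Fin 2) F) := by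
      apply Matrix.SpecialLinearGroup.mem_center_iff.mpr
      refine ⟨a, by rw [Fintype.card_fin, pow_two]; exact ha2, ?_⟩
      rw [scalar_eq_smul_one, Matrix.SpecialLinearGroup.coe_pow, hpow]
    rw [← QuotientGroup.mk_pow, QuotientGroup.eq_one_iff]
    exact hcen
  · intro y hy z hz
    obtain ⟨M, a, b, rfl, _, hM⟩ := main y hy
    obtain ⟨M', a', b', rfl, _, hM'⟩ := main z hz
    rw [← QuotientGroup.mk_mul, ← QuotientGroup.mk_mul]
    congr 1
    apply Subtype.ext
    rw [Matrix.SpecialLinearGroup.coe_mul, Matrix.SpecialLinearGroup.coe_mul, hM, hM',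
      comb_mul hN, comb_mul hN, mul_comm a' a, mul_comm b' a, mul_comm a' b, add_comm (b * a')]

lemma exists_psl2_order_p :
    ∃ u : PSL2 F, orderOf u = p := by
  have hdet : Matrix.det !![(1 : F), 1; 0, 1] = 1 := by
    rw [Matrix.det_fin_two_of]; ring
  set T : Matrix.SpecialLinearGroup (Fin 2) F := ⟨!![(1 : F), 1; 0, 1], hdet⟩ with hT
  have hE : !![(0 : F), 1; 0, 0] * !![(0 : F), 1; 0, 0] = 0 := by
    rw [Matrix.mul_fin_two]
    norm_num
    exact ext2 (by norm_num) (by norm_num) (by norm_num) (by norm_num)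
  have hTval : (T : Matrix (Fin 2) (Fin 2) F) = 1 + !![(0 : F), 1; 0, 0] := by
    refine ext2 ?_ ?_ ?_ ?_ <;>
      simp [hT, Matrix.add_apply, Matrix.one_apply]
  have hTp : T ^ p = 1 := by
    apply Subtype.ext
    rw [Matrix.SpecialLinearGroup.coe_pow, hTval, one_add_pow_of_sq_zero hE,
      ← Nat.cast_smul_eq_nsmul F, CharP.cast_eq_zero F p, zero_smul, add_zero]
    rfl
  refine ⟨QuotientGroup.mk T, ?_⟩
  have h1 : (QuotientGroup.mk T : PSL2 F) ^ p = 1 := by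
    rw [← QuotientGroup.mk_pow, hTp, QuotientGroup.mk_one]
  have h2 : (QuotientGroup.mk T : PSL2 F) ≠ 1 := by
    rw [Ne, QuotientGroup.eq_one_iff]
    intro hmem
    obtain ⟨r, _, hrs⟩ := Matrix.SpecialLinearGroup.mem_center_iff.mp hmem
    have := congrFun (congrFun (hrs.trans rfl : Matrix.scalar (Fin 2) r = (T : Matrix (Fin 2) (Fin 2) F)) 0) 1
    rw [scalar_eq_smul_one] at this
    simp [hT, Matrix.smul_apply, Matrix.one_apply] at this
  have hdvd : orderOf (QuotientGroup.mk T : PSL2 F) ∣ p := orderOf_dvd_of_pow_eq_one h1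
  rcases (Nat.Prime.eq_one_or_self_of_dvd Fact.out _ hdvd) with h | h
  · exact absurd (orderOf_eq_one_iff.mp h) h2
  · exact h

end PSL2Aux

/-- Let `q = p^k` be an odd prime power with `q > 3` and
`G = PSL₂(q)`.  Then any two distinct Sylow `p`-subgroups of `G` intersect trivially;
equivalently, every element of `G` of order `p` lies in exactly one Sylow
`p`-subgroup of `G`. -/
theorem sylow_trivial_intersection_psl2 (p k q : ℕ) (hp : p.Prime) (hpodd : Odd p)
    (hq : q = p ^ k) (hq3 : 3 < q)
    (F : Type*) [Field F] [Fintype F] (hF : Fintype.card F = q) :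
    (∀ U V : Sylow p (PSL2 F), U ≠ V →
        (U : Subgroup (PSL2 F)) ⊓ (V : Subgroup (PSL2 F)) = ⊥) ∧
    (∀ u : PSL2 F, orderOf u = p → ∃! U : Sylow p (PSL2 F), u ∈ U) := by
  haveI hfact : Fact p.Prime := ⟨hp⟩
  have hp2 : p ≠ 2 := by rintro rfl; rw [Nat.odd_iff] at hpodd; norm_num at hpodd
  have hk0 : k ≠ 0 := by rintro rfl; rw [pow_zero] at hq; omega
  haveI hCharR : CharP F (ringChar F) := ringChar.charP F
  obtain ⟨n, hrp, hcard⟩ := FiniteField.card F (ringChar F)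
  have hpr : p = ringChar F := by
    have hdvd : p ∣ Fintype.card F := by rw [hF, hq]; exact dvd_pow_self p hk0
    rw [hcard] at hdvd
    exact (Nat.prime_dvd_prime_iff_eq hp hrp).mp (hp.dvd_of_dvd_pow hdvd)
  haveI hchar : CharP F p := by rw [hpr]; exact ringChar.charP F
  haveI : Finite (Matrix.SpecialLinearGroup (Fin 2) F) :=
    Finite.of_injective (fun A => (A : Matrix (Fin 2) (Fin 2) F)) Subtype.coe_injective
  haveI : Finite (PSL2 F) := Quotient.finite _
  obtain ⟨u0, hu0⟩ := PSL2Aux.exists_psl2_order_p (F := F) p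
  have hdvdcard : p ∣ Nat.card (PSL2 F) := hu0 ▸ orderOf_dvd_natCard u0
  -- every Sylow p-subgroup is abelian
  have habel : ∀ U : Sylow p (PSL2 F), ∀ a ∈ (U : Subgroup (PSL2 F)),
      ∀ b ∈ (U : Subgroup (PSL2 F)), a * b = b * a := by
    intro U
    have hUne : (U : Subgroup (PSL2 F)) ≠ ⊥ := U.ne_bot_of_dvd_card hdvdcard
    obtain ⟨a0, ha0⟩ := Subgroup.ne_bot_iff_exists_ne_one.mp hUne
    haveI : Nontrivial ↥(U : Subgroup (PSL2 F)) := ⟨⟨a0, 1, ha0⟩⟩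
    haveI hcenter : Nontrivial (Subgroup.center ↥(U : Subgroup (PSL2 F))) :=
      U.isPGroup'.center_nontrivial
    obtain ⟨z, hz1⟩ := exists_ne (1 : Subgroup.center ↥(U : Subgroup (PSL2 F)))
    have hζ1 : ((z : ↥(U : Subgroup (PSL2 F))) : PSL2 F) ≠ 1 := by
      intro h
      exact hz1 (Subtype.ext (Subtype.ext (by simpa using h)))
    have hζp : ∃ m : ℕ, ((z : ↥(U : Subgroup (PSL2 F))) : PSL2 F) ^ p ^ m = 1 := by
      obtain ⟨m, hm⟩ := U.isPGroup' (z : ↥(U : Subgroup (PSL2 F)))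
      exact ⟨m, by simpa using congrArg Subtype.val hm⟩
    have hle : (U : Subgroup (PSL2 F)) ≤
        Subgroup.centralizer {((z : ↥(U : Subgroup (PSL2 F))) : PSL2 F)} := by
      intro g hg
      rw [Subgroup.mem_centralizer_iff]
      rintro h hh
      rw [Set.mem_singleton_iff] at hh; subst hh
      have hcz := Subgroup.mem_center_iff.mp z.2 ⟨g, hg⟩
      exact (congrArg Subtype.val hcz).symm
    obtain ⟨hCp1, hCcomm⟩ := PSL2Aux.centralizer_pgroup_comm p hp2 hpodd hζ1 hζp
    have hCpg : IsPGroup p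
        (Subgroup.centralizer {((z : ↥(U : Subgroup (PSL2 F))) : PSL2 F)}) := by
      intro g
      refine ⟨1, ?_⟩
      rw [pow_one]
      exact Subtype.ext (by rw [Subgroup.coe_pow]; simpa using hCp1 (g : PSL2 F) g.2)
    have hUeq := U.is_maximal' hCpg hle
    intro a ha b hb
    exact hCcomm a (by rw [hUeq]; exact ha) b (by rw [hUeq]; exact hb)
  have key1 : ∀ U V : Sylow p (PSL2 F), U ≠ V →
      (U : Subgroup (PSL2 F)) ⊓ (V : Subgroup (PSL2 F)) = ⊥ := by
    intro U V hUV
    by_contra hne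
    obtain ⟨⟨x, hx⟩, hx1⟩ := Subgroup.ne_bot_iff_exists_ne_one.mp hne
    have hxU : x ∈ U := (Subgroup.mem_inf.mp hx).1
    have hxV : x ∈ V := (Subgroup.mem_inf.mp hx).2
    have hx1' : x ≠ 1 := by
      intro h; exact hx1 (Subtype.ext (by simpa using h))
    have hxp : ∃ m : ℕ, x ^ p ^ m = 1 := by
      obtain ⟨m, hm⟩ := U.isPGroup' ⟨x, hxU⟩
      exact ⟨m, by simpa using congrArg Subtype.val hm⟩
    obtain ⟨hCp1, _⟩ := PSL2Aux.centralizer_pgroup_comm p hp2 hpodd hx1' hxp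
    have hCpg : IsPGroup p (Subgroup.centralizer {x} : Subgroup (PSL2 F)) := by
      intro g
      refine ⟨1, ?_⟩
      rw [pow_one]
      exact Subtype.ext (by rw [Subgroup.coe_pow]; simpa using hCp1 (g : PSL2 F) g.2)
    have hUle : (U : Subgroup (PSL2 F)) ≤ Subgroup.centralizer {x} := by
      intro g hg
      rw [Subgroup.mem_centralizer_iff]
      rintro h hh
      rw [Set.mem_singleton_iff] at hh
      rw [hh]
      exact habel U x hxU g hg
    have hVle : (V : Subgroup (PSL2 F)) ≤ Subgroup.centralizer {x} := by
      intro g hg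
      rw [Subgroup.mem_centralizer_iff]
      rintro h hh
      rw [Set.mem_singleton_iff] at hh
      rw [hh]
      exact habel V x hxV g hg
    exact hUV (Sylow.ext ((U.is_maximal' hCpg hUle).symm.trans (V.is_maximal' hCpg hVle)))
  refine ⟨key1, ?_⟩
  intro u hu
  have hu1 : u ≠ 1 := by
    intro h; rw [h, orderOf_one] at hu; exact hp.one_lt.ne' hu.symm
  have hzp : IsPGroup p (Subgroup.zpowers u) :=
    IsPGroup.of_card (by rw [Nat.card_zpowers, hu, pow_one])
  obtain ⟨U, hle⟩ := hzp.exists_le_sylow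
  refine ⟨U, hle (Subgroup.mem_zpowers u), ?_⟩
  intro V hV
  by_contra hVU
  have h0 := key1 V U hVU
  have hmem : u ∈ (V : Subgroup (PSL2 F)) ⊓ (U : Subgroup (PSL2 F)) :=
    Subgroup.mem_inf.mpr ⟨hV, hle (Subgroup.mem_zpowers u)⟩
  rw [h0, Subgroup.mem_bot] at hmem
  exact hu1 hmem
end

section
/- Let q be an odd prime power and let t be a generator of the multiplicative group F_q^× of the finite field F_q with q elements. Then the special linear group SL₂(F_q) is generated by the three matrices u(1) = [[1,1],[0,1]], h(t) = [[t,0],[0,t^{-1}]] and n(1) = [[0,1],[−1,0]]. -/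
/-- The upper unitriangular matrix `u(t) = [[1,t],[0,1]]` in `SL₂(F)`. -/
def SL2u (F : Type*) [Field F] (t : F) : Matrix.SpecialLinearGroup (Fin 2) F :=
  ⟨!![1, t; 0, 1], by simp [Matrix.det_fin_two_of]⟩

/-- The diagonal matrix `h(s) = [[s,0],[0,s⁻¹]]` in `SL₂(F)`. -/
def SL2h (F : Type*) [Field F] (s : Fˣ) : Matrix.SpecialLinearGroup (Fin 2) F :=
  ⟨!![(s : F), 0; 0, ((s⁻¹ : Fˣ) : F)], by simp [Matrix.det_fin_two_of]⟩

/-- The monomial matrix `n(s) = [[0,s],[−s⁻¹,0]]` in `SL₂(F)`. -/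
def SL2n (F : Type*) [Field F] (s : Fˣ) : Matrix.SpecialLinearGroup (Fin 2) F :=
  ⟨!![0, (s : F); -((s⁻¹ : Fˣ) : F), 0], by simp [Matrix.det_fin_two_of]⟩

def SL2v (F : Type*) [Field F] (t : F) : Matrix.SpecialLinearGroup (Fin 2) F :=
  ⟨!![1, 0; t, 1], by simp [Matrix.det_fin_two_of]⟩

section Aux
variable {F : Type*} [Field F]

private lemma sl2_ext {g h : Matrix.SpecialLinearGroup (Fin 2) F}
    (h00 : g.1 0 0 = h.1 0 0) (h01 : g.1 0 1 = h.1 0 1)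
    (h10 : g.1 1 0 = h.1 1 0) (h11 : g.1 1 1 = h.1 1 1) : g = h := by
  apply Subtype.ext
  ext i j
  fin_cases i <;> fin_cases j <;> assumption

lemma SL2u_mul (a b : F) : SL2u F a * SL2u F b = SL2u F (a + b) := by
  apply sl2_ext <;>
    simp only [Matrix.SpecialLinearGroup.coe_mul] <;>
    simp [SL2u, Matrix.SpecialLinearGroup.coe_mul, Matrix.mul_apply, Fin.sum_univ_two] <;> ring

lemma SL2u_zero : SL2u F 0 = 1 := by
  apply sl2_ext <;> simp [SL2u]

lemma SL2v_mul (a b : F) : SL2v F a * SL2v F b = SL2v F (a + b) := by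
  apply sl2_ext <;>
    simp only [Matrix.SpecialLinearGroup.coe_mul] <;>
    simp [SL2v, Matrix.SpecialLinearGroup.coe_mul, Matrix.mul_apply, Fin.sum_univ_two] <;> ring

lemma SL2v_zero : SL2v F 0 = 1 := by
  apply sl2_ext <;> simp [SL2v]

lemma SL2h_one : SL2h F 1 = 1 := by
  apply sl2_ext <;> simp [SL2h]

lemma SL2h_mul (a b : Fˣ) : SL2h F a * SL2h F b = SL2h F (a * b) := by
  apply sl2_ext <;>
    simp only [Matrix.SpecialLinearGroup.coe_mul] <;>
    simp [SL2h, Matrix.SpecialLinearGroup.coe_mul, Matrix.mul_apply, Fin.sum_univ_two] <;> ring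

lemma SL2h_u (s : Fˣ) (x : F) :
    SL2h F s * SL2u F x = SL2u F ((s : F) * s * x) * SL2h F s := by
  apply sl2_ext <;>
    simp only [Matrix.SpecialLinearGroup.coe_mul] <;>
    simp [SL2h, SL2u, Matrix.SpecialLinearGroup.coe_mul, Matrix.mul_apply, Fin.sum_univ_two] <;>
    field_simp <;> ring

lemma SL2n_u (x : F) : SL2n F 1 * SL2u F x = SL2v F (-x) * SL2n F 1 := by
  apply sl2_ext <;>
    simp only [Matrix.SpecialLinearGroup.coe_mul] <;>
    simp [SL2n, SL2u, SL2v, Matrix.SpecialLinearGroup.coe_mul, Matrix.mul_apply,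
      Fin.sum_univ_two]

lemma sl2_bruhat (g : Matrix.SpecialLinearGroup (Fin 2) F) (hc : g.1 1 0 ≠ 0) :
    g = SL2u F ((g.1 0 0 - 1) / g.1 1 0) * SL2v F (g.1 1 0) *
        SL2u F ((g.1 1 1 - 1) / g.1 1 0) := by
  have hdet : (g : Matrix (Fin 2) (Fin 2) F) 0 0 * (g : Matrix (Fin 2) (Fin 2) F) 1 1 -
      (g : Matrix (Fin 2) (Fin 2) F) 0 1 * (g : Matrix (Fin 2) (Fin 2) F) 1 0 = 1 := by
    have := g.2; rwa [Matrix.det_fin_two] at this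
  apply sl2_ext
  case h00 =>
    simp only [Matrix.SpecialLinearGroup.coe_mul]
    simp [SL2u, SL2v, Matrix.SpecialLinearGroup.coe_mul, Matrix.mul_apply, Fin.sum_univ_two]
    field_simp
    ring
  case h01 =>
    simp only [Matrix.SpecialLinearGroup.coe_mul]
    simp [SL2u, SL2v, Matrix.SpecialLinearGroup.coe_mul, Matrix.mul_apply, Fin.sum_univ_two]
    field_simp
    linear_combination -hdet
  case h10 =>
    simp only [Matrix.SpecialLinearGroup.coe_mul]
    simp [SL2u, SL2v, Matrix.SpecialLinearGroup.coe_mul, Matrix.mul_apply, Fin.sum_univ_two]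
  case h11 =>
    simp only [Matrix.SpecialLinearGroup.coe_mul]
    simp [SL2u, SL2v, Matrix.SpecialLinearGroup.coe_mul, Matrix.mul_apply, Fin.sum_univ_two]
    field_simp
    ring

end Aux

/-- Let `q` be an odd prime power and `t` a generator of `F_q^×`.
Then `SL₂(F_q)` is generated by `u(1)`, `h(t)` and `n(1)`. -/
theorem sl2_generated_by_steinberg_generators (F : Type*) [Field F] [Fintype F]
    (hodd : Odd (Fintype.card F))
    (t : Fˣ) (ht : ∀ x : Fˣ, x ∈ Subgroup.zpowers t) :
    Subgroup.closure
      ({SL2u F 1, SL2h F t, SL2n F 1} : Set (Matrix.SpecialLinearGroup (Fin 2) F)) =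
      ⊤ := by
  set G := Subgroup.closure
      ({SL2u F 1, SL2h F t, SL2n F 1} : Set (Matrix.SpecialLinearGroup (Fin 2) F)) with hG
  have hu1 : SL2u F 1 ∈ G := Subgroup.subset_closure (by simp)
  have hht : SL2h F t ∈ G := Subgroup.subset_closure (by simp)
  have hn1 : SL2n F 1 ∈ G := Subgroup.subset_closure (by simp)
  -- all diagonal matrices are in G
  let φ : Fˣ →* Matrix.SpecialLinearGroup (Fin 2) F :=
    MonoidHom.mk' (SL2h F) (fun a b => (SL2h_mul a b).symm)
  have hh : ∀ s : Fˣ, SL2h F s ∈ G := by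
    intro s
    obtain ⟨k, hk⟩ := ht s
    have : SL2h F s = (SL2h F t) ^ k := by
      rw [← hk]; exact (map_zpow φ t k)
    rw [this]
    exact zpow_mem hht k
  -- the set of x with u(x) ∈ G is an additive subgroup
  let A : AddSubgroup F :=
    { carrier := {x : F | SL2u F x ∈ G}
      zero_mem' := by simpa [SL2u_zero] using one_mem G
      add_mem' := by
        intro x y hx hy
        have : SL2u F x * SL2u F y ∈ G := mul_mem hx hy
        rwa [SL2u_mul] at this
      neg_mem' := by
        intro x hx
        have hinv : SL2u F (-x) = (SL2u F x)⁻¹ := by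
          apply eq_inv_of_mul_eq_one_left
          rw [SL2u_mul]; simpa using SL2u_zero
        show SL2u F (-x) ∈ G
        rw [hinv]
        exact inv_mem hx }
  -- all squares lie in A
  have hsq : ∀ x : F, x * x ∈ A := by
    intro x
    rcases eq_or_ne x 0 with rfl | hx
    · simpa using A.zero_mem
    · have key := SL2h_u (Units.mk0 x hx) 1
      have : SL2u F (x * x * 1) = SL2h F (Units.mk0 x hx) * SL2u F 1 *
          (SL2h F (Units.mk0 x hx))⁻¹ := by
        rw [key]; group
        norm_num [Units.val_mk0]
      show SL2u F (x * x) ∈ G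
      have hx2 : SL2u F (x * x) = SL2u F (x * x * 1) := by rw [mul_one]
      rw [hx2, this]
      exact mul_mem (mul_mem (hh _) hu1) (inv_mem (hh _))
  -- counting: A is all of F
  have hA : A = ⊤ := by
    classical
    set S : Finset F := Finset.univ.image (fun x : F => x * x) with hS
    have hcard2 : Fintype.card F ≤ 2 * S.card := by
      apply Finset.card_le_mul_card_image
      intro b hb
      obtain ⟨r, _, hr⟩ := Finset.mem_image.mp hb
      have hsub : (Finset.univ.filter (fun x : F => x * x = b)) ⊆ {r, -r} := by
        intro y hy
        have hyy : y * y = r * r := by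
          rw [hr]; exact (Finset.mem_filter.mp hy).2
        rcases mul_self_eq_mul_self_iff.mp hyy with h | h <;> simp [h]
      calc (Finset.univ.filter (fun x : F => x * x = b)).card ≤ ({r, -r} : Finset F).card :=
            Finset.card_le_card hsub
        _ ≤ 2 := Finset.card_insert_le _ _ |>.trans (by simp)
    have hSA : S.card ≤ Nat.card A := by
      have hsub : S ⊆ (A : Set F).toFinset := by
        intro b hb
        obtain ⟨r, _, hr⟩ := Finset.mem_image.mp hb
        rw [Set.mem_toFinset]
        rw [← hr]
        exact hsq r
      calc S.card ≤ (A : Set F).toFinset.card := Finset.card_le_card hsub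
        _ = Nat.card A := by rw [Set.toFinset_card]; exact (Nat.card_eq_fintype_card).symm
    have hdvd : Nat.card A ∣ Nat.card F := AddSubgroup.card_addSubgroup_dvd_card A
    have hcardF : Nat.card F = Fintype.card F := Nat.card_eq_fintype_card
    have hle : Fintype.card F ≤ 2 * Nat.card A := le_trans hcard2 (by omega)
    obtain ⟨k, hk⟩ := hdvd
    have hpos : 0 < Fintype.card F := Fintype.card_pos
    have hcardA : Nat.card A = Nat.card F := by
      rcases Nat.lt_or_ge k 2 with hk2 | hk2
      · interval_cases k <;> omega
      · exfalso
        have h2 : 2 * Nat.card A ≤ Nat.card A * k :=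
          le_trans (by omega) (Nat.mul_le_mul_left _ hk2)
        have heq : Fintype.card F = 2 * Nat.card A := by omega
        have hodd2 := Nat.odd_iff.mp hodd
        omega
    exact AddSubgroup.eq_top_of_card_eq A hcardA
  have hu : ∀ x : F, SL2u F x ∈ G := by
    intro x
    have : x ∈ A := hA ▸ AddSubgroup.mem_top x
    exact this
  -- all lower unitriangular matrices
  have hv : ∀ x : F, SL2v F x ∈ G := by
    intro x
    have key := SL2n_u (-x)
    have : SL2v F x = SL2n F 1 * SL2u F (-x) * (SL2n F 1)⁻¹ := by
      rw [key]; simp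
    rw [this]
    exact mul_mem (mul_mem hn1 (hu _)) (inv_mem hn1)
  -- conclude
  rw [eq_top_iff]
  intro g _
  by_cases hc : (g : Matrix (Fin 2) (Fin 2) F) 1 0 = 0
  · -- bottom-left entry zero: multiply by v(1) first
    have hdet : (g : Matrix (Fin 2) (Fin 2) F) 0 0 * (g : Matrix (Fin 2) (Fin 2) F) 1 1 -
        (g : Matrix (Fin 2) (Fin 2) F) 0 1 * (g : Matrix (Fin 2) (Fin 2) F) 1 0 = 1 := by
      have := g.2; rwa [Matrix.det_fin_two] at this
    have hd : (g : Matrix (Fin 2) (Fin 2) F) 1 1 ≠ 0 := by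
      intro h0
      rw [hc, h0] at hdet
      simp at hdet
    set g' := g * SL2v F 1 with hg'
    have hc' : (g' : Matrix (Fin 2) (Fin 2) F) 1 0 ≠ 0 := by
      have : (g' : Matrix (Fin 2) (Fin 2) F) 1 0 =
          (g : Matrix (Fin 2) (Fin 2) F) 1 0 * 1 + (g : Matrix (Fin 2) (Fin 2) F) 1 1 * 1 := by
        rw [hg', Matrix.SpecialLinearGroup.coe_mul]
        simp [SL2v, Matrix.SpecialLinearGroup.coe_mul, Matrix.mul_apply, Fin.sum_univ_two]
      rw [this, hc]
      simpa using hd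
    have hg'mem : g' ∈ G := by
      rw [sl2_bruhat g' hc']
      exact mul_mem (mul_mem (hu _) (hv _)) (hu _)
    have : g = g' * SL2v F (-1) := by
      rw [hg', mul_assoc, SL2v_mul]
      simp [SL2v_zero]
    rw [this]
    exact mul_mem hg'mem (hv _)
  · rw [sl2_bruhat g hc]
    exact mul_mem (mul_mem (hu _) (hv _)) (hu _)
end
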